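/- Let N ≥ 1 and let X ~ N(-a·1_N, σ²Σ) and Y ~ N(-b·1_N, τ²Σ) be independent Gaussian vectors with Σ = (1/2)(I_N + 1_N 1_N^T), where a ∈ ℝ, b ≥ τ²/2, σ, τ > 0. Then for every binary vector δ ∈ {0,1}^N, E[ (Σ_{i=1}^N exp(X_i + δ_i Y_i)) / (1 + Σ_{i=1}^N exp(X_i + δ_i Y_i)) ] ≥ (1 + exp(σ²/2 + a + τ²/2 + b)/N)^{-1}. -/

import Mathlib

open MeasureTheory ProbabilityTheory Real


lemma my_gauss_density (t : ℝ) :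
    (fun x : ℝ => Real.toNNReal (gaussianPDFReal 0 1 x) • Real.exp (t * x)) =
      fun x : ℝ => ((Real.sqrt (2 * π))⁻¹ * Real.exp (t ^ 2 / 2)) *
        Real.exp (-(2⁻¹ : ℝ) * (x - t) ^ 2) := by
  funext x
  rw [NNReal.smul_def, Real.coe_toNNReal _ (gaussianPDFReal_nonneg 0 1 x)]
  rw [gaussianPDFReal_def]
  push_cast
  rw [smul_eq_mul, mul_one, mul_assoc, mul_assoc, ← Real.exp_add, ← Real.exp_add]
  ring_nf

lemma my_gauss_integrable_aux (t : ℝ) :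
    Integrable (fun x : ℝ => Real.toNNReal (gaussianPDFReal 0 1 x) • Real.exp (t * x)) := by
  rw [my_gauss_density]
  exact (((integrable_exp_neg_mul_sq (by norm_num : (0:ℝ) < 2⁻¹)).comp_sub_right t)).const_mul _

lemma my_gauss_eq : gaussianReal 0 1 =
    volume.withDensity fun x => (Real.toNNReal (gaussianPDFReal 0 1 x) : ENNReal) := by
  rw [gaussianReal_of_var_ne_zero 0 one_ne_zero]
  rfl

lemma my_gauss_mgf_integrable (t : ℝ) :
    Integrable (fun x : ℝ => Real.exp (t * x)) (gaussianReal 0 1) := by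
  rw [my_gauss_eq,
    integrable_withDensity_iff_integrable_smul (measurable_gaussianPDFReal 0 1).real_toNNReal]
  exact my_gauss_integrable_aux t

lemma my_gauss_mgf (t : ℝ) :
    ∫ x, Real.exp (t * x) ∂(gaussianReal 0 1) = Real.exp (t ^ 2 / 2) := by
  rw [my_gauss_eq,
    integral_withDensity_eq_integral_smul (measurable_gaussianPDFReal 0 1).real_toNNReal,
    my_gauss_density]
  rw [integral_const_mul, integral_sub_right_eq_self (fun x => Real.exp (-(2⁻¹:ℝ) * x ^ 2)) t,
    integral_gaussian]
  rw [show π / 2⁻¹ = 2 * π by ring]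
  rw [mul_comm, ← mul_assoc, mul_inv_cancel₀ (by positivity), one_mul]


lemma my_pi_map_eval {N : ℕ} (i : Fin N) :
    (Measure.pi fun _ : Fin N => gaussianReal 0 1).map (Function.eval i) = gaussianReal 0 1 := by
  ext s hs
  rw [Measure.map_apply (measurable_pi_apply i) hs, Set.eval_preimage, Measure.pi_pi]
  rw [Fintype.prod_eq_single i (fun j hj => by simp [Function.update_of_ne hj])]
  simp

lemma my_pi_integrable {N : ℕ} (i : Fin N) {g : ℝ → ℝ} (hg : Integrable g (gaussianReal 0 1)) :
    Integrable (fun z : Fin N → ℝ => g (z i)) (Measure.pi fun _ : Fin N => gaussianReal 0 1) := by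
  have := (integrable_map_measure (f := Function.eval i) (g := g)
    (by rw [my_pi_map_eval]; exact hg.aestronglyMeasurable)
    (measurable_pi_apply i).aemeasurable).mp
  rw [my_pi_map_eval] at this
  exact this hg

lemma my_pi_integral {N : ℕ} (i : Fin N) {g : ℝ → ℝ}
    (hg : AEStronglyMeasurable g (gaussianReal 0 1)) :
    ∫ z : Fin N → ℝ, g (z i) ∂(Measure.pi fun _ : Fin N => gaussianReal 0 1) =
      ∫ x, g x ∂(gaussianReal 0 1) := by
  have h := integral_map (φ := Function.eval i) (f := g)
    (μ := Measure.pi fun _ : Fin N => gaussianReal 0 1)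
    (measurable_pi_apply i).aemeasurable
    (by rw [my_pi_map_eval]; exact hg)
  rw [my_pi_map_eval] at h
  exact h.symm

lemma my_tangent {u m : ℝ} (hu : 0 < u) (hm : 0 ≤ m) :
    (1 + m)⁻¹ - (u - m) / (1 + m) ^ 2 ≤ (1 + u)⁻¹ := by
  have h1 : (0:ℝ) < 1 + m := by linarith
  have h2 : (0:ℝ) < 1 + u := by linarith
  rw [inv_eq_one_div, inv_eq_one_div, div_sub_div _ _ (ne_of_gt h1) (by positivity),
    div_le_div_iff₀ (by positivity) h2]
  nlinarith [sq_nonneg (u - m)]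

lemma my_amhm {N : ℕ} (hN : 1 ≤ N) (e : Fin N → ℝ) (he : ∀ i, 0 < e i) :
    (∑ i, e i)⁻¹ ≤ (∑ i, (e i)⁻¹) / (N : ℝ) ^ 2 := by
  have hs : (0:ℝ) < ∑ i, e i := Finset.sum_pos (fun i _ => he i) ⟨⟨0, hN⟩, Finset.mem_univ _⟩
  have hs' : (0:ℝ) < ∑ i, (e i)⁻¹ :=
    Finset.sum_pos (fun i _ => inv_pos.mpr (he i)) ⟨⟨0, hN⟩, Finset.mem_univ _⟩
  have key : (N : ℝ) ^ 2 ≤ (∑ i, e i) * ∑ i, (e i)⁻¹ := by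
    have := Finset.sum_mul_sq_le_sq_mul_sq Finset.univ
      (fun i => Real.sqrt (e i)) (fun i => (Real.sqrt (e i))⁻¹)
    have h1 : ∀ i : Fin N, Real.sqrt (e i) * (Real.sqrt (e i))⁻¹ = 1 := fun i =>
      mul_inv_cancel₀ (ne_of_gt (Real.sqrt_pos.mpr (he i)))
    simp only [h1] at this
    have h2 : ∀ i : Fin N, Real.sqrt (e i) ^ 2 = e i := fun i => Real.sq_sqrt (he i).le
    have h3 : ∀ i : Fin N, ((Real.sqrt (e i))⁻¹) ^ 2 = (e i)⁻¹ := fun i => by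
      rw [inv_pow, h2]
    simp only [h2, h3, Finset.sum_const, Finset.card_univ, Fintype.card_fin,
      nsmul_eq_mul, mul_one] at this
    exact_mod_cast this
  rw [inv_le_iff_one_le_mul₀ hs, div_mul_eq_mul_div, le_div_iff₀ (by positivity), one_mul]
  calc ((N:ℝ))^2 ≤ (∑ i, e i) * ∑ i, (e i)⁻¹ := key
  _ = (∑ i, (e i)⁻¹) * (∑ i, e i) := mul_comm _ _

lemma my_half_eq {N : ℕ} (c t : ℝ) (i : Fin N) :
    (fun p : ℝ × (Fin N → ℝ) => Real.exp (c + t * p.1 + t * p.2 i))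
      = fun p => (Real.exp c * Real.exp (t * p.1)) * Real.exp (t * p.2 i) := by
  funext p; rw [← Real.exp_add, ← Real.exp_add]

lemma my_half_integrable {N : ℕ} (c t : ℝ) (i : Fin N) :
    Integrable (fun p : ℝ × (Fin N → ℝ) => Real.exp (c + t * p.1 + t * p.2 i))
      ((gaussianReal 0 1).prod (Measure.pi fun _ : Fin N => gaussianReal 0 1)) := by
  rw [my_half_eq]
  exact ((my_gauss_mgf_integrable t).const_mul _).mul_prod
    (my_pi_integrable i (my_gauss_mgf_integrable t))

lemma my_half_integral {N : ℕ} (c t : ℝ) (i : Fin N) :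
    ∫ p : ℝ × (Fin N → ℝ), Real.exp (c + t * p.1 + t * p.2 i)
      ∂((gaussianReal 0 1).prod (Measure.pi fun _ : Fin N => gaussianReal 0 1))
      = Real.exp (c + t ^ 2) := by
  rw [my_half_eq, integral_prod_mul (f := fun x : ℝ => Real.exp c * Real.exp (t * x))
    (g := fun z : Fin N → ℝ => Real.exp (t * z i)), my_pi_integral i
    (my_gauss_mgf_integrable t).aestronglyMeasurable, integral_const_mul, my_gauss_mgf,
    ← Real.exp_add, ← Real.exp_add]
  congr 1; ring

lemma my_full_integrable {N : ℕ} (c1 t1 c2 t2 : ℝ) (i : Fin N) :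
    Integrable (fun q : (ℝ × (Fin N → ℝ)) × (ℝ × (Fin N → ℝ)) =>
        Real.exp ((c1 + t1 * q.1.1 + t1 * q.1.2 i) + (c2 + t2 * q.2.1 + t2 * q.2.2 i)))
      (((gaussianReal 0 1).prod (Measure.pi fun _ : Fin N => gaussianReal 0 1)).prod
        ((gaussianReal 0 1).prod (Measure.pi fun _ : Fin N => gaussianReal 0 1))) := by
  have heq : (fun q : (ℝ × (Fin N → ℝ)) × (ℝ × (Fin N → ℝ)) =>
      Real.exp ((c1 + t1 * q.1.1 + t1 * q.1.2 i) + (c2 + t2 * q.2.1 + t2 * q.2.2 i)))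
      = fun q => (fun p : ℝ × (Fin N → ℝ) => Real.exp (c1 + t1 * p.1 + t1 * p.2 i)) q.1 *
          (fun p : ℝ × (Fin N → ℝ) => Real.exp (c2 + t2 * p.1 + t2 * p.2 i)) q.2 := by
    funext q; exact Real.exp_add _ _
  rw [heq]
  exact (my_half_integrable c1 t1 i).mul_prod (my_half_integrable c2 t2 i)

lemma my_full_integral {N : ℕ} (c1 t1 c2 t2 : ℝ) (i : Fin N) :
    ∫ q : (ℝ × (Fin N → ℝ)) × (ℝ × (Fin N → ℝ)),
        Real.exp ((c1 + t1 * q.1.1 + t1 * q.1.2 i) + (c2 + t2 * q.2.1 + t2 * q.2.2 i))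
      ∂(((gaussianReal 0 1).prod (Measure.pi fun _ : Fin N => gaussianReal 0 1)).prod
        ((gaussianReal 0 1).prod (Measure.pi fun _ : Fin N => gaussianReal 0 1)))
      = Real.exp (c1 + t1 ^ 2 + c2 + t2 ^ 2) := by
  have heq : (fun q : (ℝ × (Fin N → ℝ)) × (ℝ × (Fin N → ℝ)) =>
      Real.exp ((c1 + t1 * q.1.1 + t1 * q.1.2 i) + (c2 + t2 * q.2.1 + t2 * q.2.2 i)))
      = fun q => (fun p : ℝ × (Fin N → ℝ) => Real.exp (c1 + t1 * p.1 + t1 * p.2 i)) q.1 *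
          (fun p : ℝ × (Fin N → ℝ) => Real.exp (c2 + t2 * p.1 + t2 * p.2 i)) q.2 := by
    funext q; exact Real.exp_add _ _
  rw [heq, integral_prod_mul (f := fun p : ℝ × (Fin N → ℝ) => Real.exp (c1 + t1 * p.1 + t1 * p.2 i))
    (g := fun p : ℝ × (Fin N → ℝ) => Real.exp (c2 + t2 * p.1 + t2 * p.2 i)),
    my_half_integral, my_half_integral, ← Real.exp_add]
  congr 1; ring

/-- Lower bound on the expected Boltzmann acceptance probability for independent exchangeable
Gaussian vectors `X ~ N(-a·1_N, σ²Σ)`, `Y ~ N(-b·1_N, τ²Σ)` with `Σ = ½(I_N + 1_N 1_Nᵀ)`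
and `b ≥ τ²/2`, realised as `X_i = -a + σ(W + Z_i)/√2`, `Y_i = -b + τ(W' + Z'_i)/√2`
with all underlying variables i.i.d. standard normal, for any binary vector `δ`. -/
theorem expected_boltzmann_lower_bound_binary (N : ℕ) (hN : 1 ≤ N) (σ τ a b : ℝ)
    (hσ : 0 < σ) (hτ : 0 < τ) (hb : τ ^ 2 / 2 ≤ b)
    (δ : Fin N → ℝ) (hδ : ∀ i, δ i = 0 ∨ δ i = 1) :
    (1 + Real.exp (σ ^ 2 / 2 + a + τ ^ 2 / 2 + b) / N)⁻¹ ≤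
      ∫ q : (ℝ × (Fin N → ℝ)) × (ℝ × (Fin N → ℝ)),
        (∑ i : Fin N, Real.exp ((-a + σ * (q.1.1 + q.1.2 i) / Real.sqrt 2) +
            δ i * (-b + τ * (q.2.1 + q.2.2 i) / Real.sqrt 2))) /
          (1 + ∑ i : Fin N, Real.exp ((-a + σ * (q.1.1 + q.1.2 i) / Real.sqrt 2) +
            δ i * (-b + τ * (q.2.1 + q.2.2 i) / Real.sqrt 2)))
        ∂(((gaussianReal 0 1).prod (Measure.pi fun _ : Fin N => gaussianReal 0 1)).prod
            ((gaussianReal 0 1).prod (Measure.pi fun _ : Fin N => gaussianReal 0 1))) := by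
  classical
  haveI : Nonempty (Fin N) := ⟨⟨0, hN⟩⟩
  have sqrt2 : Real.sqrt 2 ^ 2 = 2 := Real.sq_sqrt (by norm_num)
  have hN' : (0:ℝ) < N := by exact_mod_cast hN
  set μ : Measure ((ℝ × (Fin N → ℝ)) × (ℝ × (Fin N → ℝ))) :=
    ((gaussianReal 0 1).prod (Measure.pi fun _ : Fin N => gaussianReal 0 1)).prod
      ((gaussianReal 0 1).prod (Measure.pi fun _ : Fin N => gaussianReal 0 1)) with hμ
  haveI : IsProbabilityMeasure μ := by rw [hμ]; infer_instance
  set V : Fin N → ((ℝ × (Fin N → ℝ)) × (ℝ × (Fin N → ℝ))) → ℝ := fun i q =>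
    (-a + σ * (q.1.1 + q.1.2 i) / Real.sqrt 2) +
      δ i * (-b + τ * (q.2.1 + q.2.2 i) / Real.sqrt 2) with hV
  set S : ((ℝ × (Fin N → ℝ)) × (ℝ × (Fin N → ℝ))) → ℝ := fun q => ∑ i, Real.exp (V i q) with hS
  set K := Real.exp (σ ^ 2 / 2 + a + τ ^ 2 / 2 + b) with hK
  have hKpos : 0 < K := Real.exp_pos _
  show (1 + K / (N:ℝ))⁻¹ ≤ ∫ q, S q / (1 + S q) ∂μ
  have hVmeas : ∀ i, Measurable (V i) := by
    intro i; simp only [hV]; fun_prop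
  have hSmeas : Measurable S := by
    simp only [hS]
    exact Finset.measurable_sum _ fun i _ => (hVmeas i).exp
  have hSpos : ∀ q, 0 < S q := by
    intro q
    exact Finset.sum_pos (fun i _ => Real.exp_pos _) Finset.univ_nonempty
  have hrw : ∀ i, (fun q => Real.exp (-(V i q)))
      = fun q : (ℝ × (Fin N → ℝ)) × (ℝ × (Fin N → ℝ)) =>
      Real.exp ((a + (-(σ / Real.sqrt 2)) * q.1.1 + (-(σ / Real.sqrt 2)) * q.1.2 i) +
        (δ i * b + (-(δ i * τ / Real.sqrt 2)) * q.2.1 + (-(δ i * τ / Real.sqrt 2)) * q.2.2 i)) := by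
    intro i; funext q; simp only [hV]; congr 1; ring
  have hexp_int : ∀ i, Integrable (fun q => Real.exp (-(V i q))) μ := by
    intro i; rw [hrw i, hμ]; exact my_full_integrable _ _ _ _ i
  have hexp_val : ∀ i, ∫ q, Real.exp (-(V i q)) ∂μ ≤ K := by
    intro i
    rw [hrw i, hμ, my_full_integral, hK]
    apply Real.exp_le_exp.mpr
    have ht1 : (-(σ / Real.sqrt 2)) ^ 2 = σ ^ 2 / 2 := by rw [neg_sq, div_pow, sqrt2]
    have ht2 : (-(δ i * τ / Real.sqrt 2)) ^ 2 = δ i ^ 2 * τ ^ 2 / 2 := by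
      rw [neg_sq, div_pow, sqrt2, mul_pow]
    rw [ht1, ht2]
    rcases hδ i with h | h
    · rw [h]; norm_num; nlinarith [sq_nonneg τ]
    · rw [h]; norm_num; linarith
  have G_int : Integrable (fun q => (∑ i, Real.exp (-(V i q))) / (N:ℝ)^2) μ :=
    (integrable_finset_sum _ fun i _ => hexp_int i).div_const _
  have hinvle : ∀ q, (S q)⁻¹ ≤ (∑ i, Real.exp (-(V i q))) / (N:ℝ)^2 := by
    intro q
    have h := my_amhm hN (fun i => Real.exp (V i q)) (fun i => Real.exp_pos _)
    simp only [← Real.exp_neg] at h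
    exact h
  have hinv_int : Integrable (fun q => (S q)⁻¹) μ := by
    apply Integrable.mono' G_int hSmeas.inv.aestronglyMeasurable
    filter_upwards with q
    rw [Real.norm_eq_abs, Pi.inv_apply, abs_of_nonneg (inv_nonneg.mpr (hSpos q).le)]
    exact hinvle q
  set m := ∫ q, (S q)⁻¹ ∂μ with hm
  have hm0 : 0 ≤ m := integral_nonneg fun q => inv_nonneg.mpr (hSpos q).le
  have hmK : m ≤ K / N := by
    have h1 : m ≤ ∫ q, (∑ i, Real.exp (-(V i q))) / (N:ℝ)^2 ∂μ :=
      integral_mono hinv_int G_int hinvle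
    have h2 : ∫ q, (∑ i, Real.exp (-(V i q))) / (N:ℝ)^2 ∂μ
        = (∑ i, ∫ q, Real.exp (-(V i q)) ∂μ) / (N:ℝ)^2 := by
      rw [integral_div, integral_finset_sum _ fun i _ => hexp_int i]
    have h3 : (∑ i : Fin N, ∫ q, Real.exp (-(V i q)) ∂μ) ≤ (N:ℝ) * K := by
      calc (∑ _i : Fin N, ∫ q, Real.exp (-(V _i q)) ∂μ) ≤ ∑ _i : Fin N, K :=
            Finset.sum_le_sum fun i _ => hexp_val i
      _ = (N:ℝ) * K := by
          rw [Finset.sum_const, Finset.card_univ, Fintype.card_fin, nsmul_eq_mul]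
    have h4 : ((N:ℝ) * K) / (N:ℝ)^2 = K / N := by
      field_simp
    calc m ≤ _ := h1
    _ = _ := h2
    _ ≤ ((N:ℝ) * K) / (N:ℝ)^2 := by gcongr
    _ = K / N := h4
  have hfrac_int : Integrable (fun q => S q / (1 + S q)) μ := by
    apply Integrable.mono' (integrable_const (1:ℝ))
      (hSmeas.div (measurable_const.add hSmeas)).aestronglyMeasurable
    filter_upwards with q
    have h1 : (0:ℝ) < 1 + S q := by linarith [hSpos q]
    simp only [Pi.div_apply, Pi.add_apply]
    rw [Real.norm_eq_abs, abs_of_nonneg (div_nonneg (hSpos q).le h1.le), div_le_one h1]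
    linarith [hSpos q]
  have hlow_int : Integrable (fun q => (1+m)⁻¹ - ((S q)⁻¹ - m) / (1+m)^2) μ :=
    (integrable_const _).sub ((hinv_int.sub (integrable_const m)).div_const _)
  have hpt : ∀ q, (1+m)⁻¹ - ((S q)⁻¹ - m) / (1+m)^2 ≤ S q / (1 + S q) := by
    intro q
    have h := my_tangent (inv_pos.mpr (hSpos q)) hm0
    have hS0 : S q ≠ 0 := (hSpos q).ne'
    have h2 : ((1:ℝ) + (S q)⁻¹)⁻¹ = S q / (1 + S q) := by
      rw [show (1:ℝ) + (S q)⁻¹ = (1 + S q) / S q by field_simp; ring, inv_div]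
    rw [h2] at h
    exact h
  have hlow_val : ∫ q, ((1+m)⁻¹ - ((S q)⁻¹ - m) / (1+m)^2) ∂μ = (1+m)⁻¹ := by
    have e1 : ∫ q, ((S q)⁻¹ - m) ∂μ = 0 := by
      rw [integral_sub hinv_int (integrable_const m)]
      simp [← hm]
    have hsub_int : Integrable (fun q => ((S q)⁻¹ - m) / (1+m)^2) μ :=
      (hinv_int.sub (integrable_const m)).div_const _
    rw [integral_sub (integrable_const _) hsub_int, integral_div, e1]
    simp
  calc (1 + K / (N:ℝ))⁻¹ ≤ (1 + m)⁻¹ := by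
        gcongr
    _ = ∫ q, ((1+m)⁻¹ - ((S q)⁻¹ - m) / (1+m)^2) ∂μ := hlow_val.symm
    _ ≤ ∫ q, S q / (1 + S q) ∂μ := integral_mono hlow_int hfrac_int hpt
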